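/- Let a : ℤ → ℤ satisfy the Ward recurrence families: for all m, n ∈ ℤ, a(m+n)·a(m−n) = a(n)²·a(m−1)·a(m+1) − a(n−1)·a(n+1)·a(m)², and a(1)·a(2)·a(m+n+1)·a(m−n) = a(n)·a(n+1)·a(m−1)·a(m+2) − a(n−1)·a(n+2)·a(m)·a(m+1). Suppose a(0) = 0 and that consecutive terms are coprime: for all n ∈ ℤ, IsCoprime (a(n)) (a(n+1)). Then the sequence is a divisibility sequence: for all integers k > 1 and all m ∈ ℤ, if k divides m then a(k) divides a(m). -/

import Mathlib

namespace EDSAux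


/-- p-adic valuation of a nonzero integer, as a natural number. -/
def pv (p : ℕ) (x : ℤ) : ℕ := x.natAbs.factorization p

lemma natCast_dvd_iff (n : ℕ) (z : ℤ) : (↑n ∣ z) ↔ n ∣ z.natAbs := by
  rw [← Int.natAbs_dvd_natAbs]; simp

lemma pv_pow_dvd_iff {p : ℕ} (hp : p.Prime) {x : ℤ} (hx : x ≠ 0) (n : ℕ) :
    (p : ℤ) ^ n ∣ x ↔ n ≤ pv p x := by
  rw [show ((p:ℤ))^n = ((p^n : ℕ) : ℤ) by push_cast; ring, natCast_dvd_iff]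
  exact Nat.Prime.pow_dvd_iff_le_factorization hp (by simpa using hx)

lemma pv_dvd_iff {p : ℕ} (hp : p.Prime) {x : ℤ} (hx : x ≠ 0) :
    (p : ℤ) ∣ x ↔ 1 ≤ pv p x := by
  simpa using pv_pow_dvd_iff hp hx 1

lemma pv_mul {p : ℕ} (hp : p.Prime) {x y : ℤ} (hx : x ≠ 0) (hy : y ≠ 0) :
    pv p (x * y) = pv p x + pv p y := by
  unfold pv
  rw [Int.natAbs_mul, Nat.factorization_mul (by simpa using hx) (by simpa using hy)]
  rfl

lemma pv_eq_zero_of_not_dvd {p : ℕ} (hp : p.Prime) {x : ℤ} (h : ¬ (p:ℤ) ∣ x) :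
    pv p x = 0 := by
  have hx : x ≠ 0 := by rintro rfl; exact h (dvd_zero _)
  by_contra hne
  exact h ((pv_dvd_iff hp hx).2 (Nat.one_le_iff_ne_zero.2 hne))

lemma pv_sub {p : ℕ} (hp : p.Prime) {x y : ℤ} (hx : x ≠ 0) (hy : y ≠ 0)
    (h : pv p x < pv p y) : x - y ≠ 0 ∧ pv p (x - y) = pv p x := by
  have hxy : x - y ≠ 0 := by
    intro he
    rw [sub_eq_zero] at he; subst he; exact lt_irrefl _ h
  have hdx : (p:ℤ) ^ (pv p x) ∣ x := (pv_pow_dvd_iff hp hx _).2 le_rfl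
  have hdy : (p:ℤ) ^ (pv p x) ∣ y := (pv_pow_dvd_iff hp hy _).2 h.le
  have hd : (p:ℤ) ^ (pv p x) ∣ x - y := dvd_sub hdx hdy
  have hnd : ¬ (p:ℤ) ^ (pv p x + 1) ∣ x - y := by
    intro hc
    have hdy' : (p:ℤ) ^ (pv p x + 1) ∣ y := (pv_pow_dvd_iff hp hy _).2 h
    have : (p:ℤ) ^ (pv p x + 1) ∣ x := by
      have := dvd_add hc hdy'; simpa using this
    have := (pv_pow_dvd_iff hp hx _).1 this
    omega
  constructor
  · exact hxy
  · have h1 := (pv_pow_dvd_iff hp hxy _).1 hd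
    have h2 : ¬ (pv p x + 1 ≤ pv p (x - y)) := fun hle => hnd ((pv_pow_dvd_iff hp hxy _).2 hle)
    omega

lemma exists_prime_pv_lt {x y : ℤ} (hx : x ≠ 0) (hy : y ≠ 0) (h : ¬ x ∣ y) :
    ∃ p : ℕ, p.Prime ∧ pv p y < pv p x := by
  have hnd : ¬ x.natAbs ∣ y.natAbs := fun hc => h (Int.natAbs_dvd_natAbs.1 hc)
  have hx' : x.natAbs ≠ 0 := by simpa using hx
  have hy' : y.natAbs ≠ 0 := by simpa using hy
  have : ¬ x.natAbs.factorization ≤ y.natAbs.factorization := fun hle =>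
    hnd ((Nat.factorization_le_iff_dvd hx' hy').1 hle)
  rw [Finsupp.le_def] at this
  push_neg at this
  obtain ⟨p, hple⟩ := this
  refine ⟨p, ?_, hple⟩
  by_contra hnp
  have : x.natAbs.factorization p = 0 := by
    exact Nat.factorization_eq_zero_of_not_prime _ hnp
  omega



section Basic

variable (a : ℤ → ℤ)
    (hW1 : ∀ m n : ℤ, a (m + n) * a (m - n) =
      (a n) ^ 2 * (a (m - 1) * a (m + 1)) - a (n - 1) * a (n + 1) * (a m) ^ 2)
    (hW2 : ∀ m n : ℤ, a 1 * a 2 * (a (m + n + 1) * a (m - n)) =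
      a n * a (n + 1) * (a (m - 1) * a (m + 2)) - a (n - 1) * a (n + 2) * (a m * a (m + 1)))
    (h0 : a 0 = 0)
    (hcop : ∀ n : ℤ, IsCoprime (a n) (a (n + 1)))

include hcop h0 in
lemma a1_unit : IsUnit (a 1) := by
  have := hcop 0
  rw [h0, zero_add] at this
  exact isCoprime_zero_left.1 this

include hcop h0 in
lemma a1_sq : a 1 ^ 2 = 1 := by
  rcases Int.isUnit_iff.1 (a1_unit a h0 hcop) with h | h <;> rw [h] <;> ring

include hW1 h0 hcop in
lemma neg_one_mul_one : a (-1) * a 1 = -1 := by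
  have h := hW1 1 0
  have h1 := a1_sq a h0 hcop
  norm_num [h0] at h
  -- h : a 1 * a 1 = -(a (-1) * a 1 * a 1 ^ 2)  (roughly)
  nlinarith [h, h1]

include hW1 h0 hcop in
lemma a_neg : ∀ n : ℤ, a (-n) = - a n := by
  have key : ∀ n : ℤ, a n * a (-n) = - (a n)^2 := by
    intro n
    have h := hW1 0 n
    rw [h0] at h
    have hm : a (-1) * a 1 = -1 := neg_one_mul_one a hW1 h0 hcop
    have : a (0 + n) = a n := by norm_num
    rw [this] at h
    have : a (0 - n) = a (-n) := by norm_num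
    rw [this] at h
    have : (0:ℤ) - 1 = -1 := by norm_num
    rw [this] at h
    have : (0:ℤ) + 1 = 1 := by norm_num
    rw [this] at h
    nlinarith [h, hm]
  intro n
  have h1 := key n
  have h2 := key (-n)
  rw [neg_neg] at h2
  have hsum : (a n + a (-n))^2 = 0 := by nlinarith [h1, h2]
  have := pow_eq_zero_iff (n := 2) (by norm_num) |>.1 hsum
  linarith

include hW2 h0 hcop in
/-- Doubling identity: `a 2 * a (2n) = a n * (a(n-1)^2 a(n+2) - a(n-2) a(n+1)^2)`. -/
lemma doubling : ∀ n : ℤ, a 2 * a (2 * n) =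
    a n * (a (n - 1) ^ 2 * a (n + 2) - a (n - 2) * a (n + 1) ^ 2) := by
  intro n
  have h := hW2 n (n - 1)
  have e1 : n + (n - 1) + 1 = 2 * n := by ring
  have e2 : n - (n - 1) = 1 := by ring
  have e3 : n - 1 - 1 = n - 2 := by ring
  have e4 : n - 1 + 1 = n := by ring
  have e5 : n - 1 + 2 = n + 1 := by ring
  rw [e1, e2, e3, e4, e5] at h
  have h1 := a1_sq a h0 hcop
  linear_combination h - a 2 * a (2 * n) * h1

include hW1 in
/-- hW1 instance with `(m,n) = (x+1, x)`: `a (2x+1) * a 1 = a x ^3 * a (x+2) - a (x-1) * a(x+1)^3`. -/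
lemma odd_entry : ∀ x : ℤ, a (2*x + 1) * a 1 = a x ^ 2 * (a x * a (x + 2)) - a (x - 1) * a (x + 1) * a (x + 1) ^ 2 := by
  intro x
  have h := hW1 (x + 1) x
  have e1 : x + 1 + x = 2*x + 1 := by ring
  have e2 : x + 1 - x = 1 := by ring
  have e3 : x + 1 - 1 = x := by ring
  have e4 : x + 1 + 1 = x + 2 := by ring
  rw [e1, e2, e3, e4] at h
  linarith [h]

end Basic

lemma pv_neg {p : ℕ} (x : ℤ) : pv p (-x) = pv p x := by
  unfold pv; rw [Int.natAbs_neg]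

lemma pv_sub' {p : ℕ} (hp : p.Prime) {x y : ℤ} (hx : x ≠ 0) (hy : y ≠ 0)
    (h : pv p y < pv p x) : x - y ≠ 0 ∧ pv p (x - y) = pv p y := by
  obtain ⟨h1, h2⟩ := pv_sub hp hy hx h
  have e : x - y = -(y - x) := by ring
  constructor
  · rw [e]; exact neg_ne_zero.2 h1
  · rw [e, pv_neg]; exact h2

lemma int_prime {p : ℕ} (hp : p.Prime) : Prime (p : ℤ) := by
  rw [Int.prime_iff_natAbs_prime]; simpa using hp

section Crux

variable {a : ℤ → ℤ}
    (hW1 : ∀ m n : ℤ, a (m + n) * a (m - n) =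
      (a n) ^ 2 * (a (m - 1) * a (m + 1)) - a (n - 1) * a (n + 1) * (a m) ^ 2)
    (hW2 : ∀ m n : ℤ, a 1 * a 2 * (a (m + n + 1) * a (m - n)) =
      a n * a (n + 1) * (a (m - 1) * a (m + 2)) - a (n - 1) * a (n + 2) * (a m * a (m + 1)))
    (h0 : a 0 = 0)
    (hcop : ∀ n : ℤ, IsCoprime (a n) (a (n + 1)))

include hW1 hW2 h0 hcop in
lemma crux (ha2 : a 2 ≠ 0) : a 2 ∣ a 4 := by
  by_contra hnd
  have ha4 : a 4 ≠ 0 := by rintro h; exact hnd (h ▸ dvd_zero _)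
  obtain ⟨p, hp, hlt⟩ := exists_prime_pv_lt ha2 ha4 hnd
  have hpZ : Prime (p : ℤ) := int_prime hp
  set α : ℕ := pv p (a 2) with hα
  set β : ℕ := pv p (a 4) with hβ
  set A : ℤ := (α : ℤ) with hA
  set δ : ℤ := A - (β : ℤ) with hδ
  have hδ1 : 1 ≤ δ := by
    have hc : (β:ℤ) < (α:ℤ) := by exact_mod_cast hlt
    simp only [hδ, hA]; linarith
  have hpa2 : (p : ℤ) ∣ a 2 := (pv_dvd_iff hp ha2).2 (by omega)
  have main : ∀ n : ℕ,
      (∀ m : ℕ, n = 2*m → 1 ≤ m →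
        (a (2*(m:ℤ)) ≠ 0 ∧ (pv p (a (2*(m:ℤ))) : ℤ) = A - ((m:ℤ)-1)*δ)) ∧
      (∀ m : ℕ, n = 2*m+1 → ¬ (p:ℤ) ∣ a (2*(m:ℤ)+1)) := by
    intro n
    induction n using Nat.strong_induction_on with
    | _ n IH =>
    have getCE : ∀ j : ℕ, 1 ≤ j → 2*j < n →
        (a (2*(j:ℤ)) ≠ 0 ∧ (pv p (a (2*(j:ℤ))) : ℤ) = A - ((j:ℤ)-1)*δ) :=
      fun j h1 h2 => (IH (2*j) h2).1 j rfl h1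
    have getCO : ∀ j : ℕ, 2*j+1 < n → ¬ (p:ℤ) ∣ a (2*(j:ℤ)+1) :=
      fun j h2 => (IH (2*j+1) h2).2 j rfl
    -- positivity helper : if both CE j and CE (j+1) available then p ∣ a (2j)
    have pos_dvd : ∀ j : ℕ, 1 ≤ j → 2*(j+1) < n → (p:ℤ) ∣ a (2*(j:ℤ)) := by
      intro j h1 h2
      have hj := getCE j h1 (by omega)
      have hj1 := getCE (j+1) (by omega) h2
      have h0' : (0:ℤ) ≤ (pv p (a (2*((j:ℕ)+1:ℕ):ℤ)) : ℤ) := by positivity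
      rw [hj1.2] at h0'
      push_cast at h0'
      refine (pv_dvd_iff hp hj.1).2 ?_
      have : (1:ℤ) ≤ (pv p (a (2*(j:ℤ))) : ℤ) := by rw [hj.2]; nlinarith
      exact_mod_cast this
    constructor
    · -- even claims
      rintro m rfl hm
      have hcases : m = 1 ∨ m = 2 ∨ (∃ i, m = 2*i+4) ∨ (∃ i, m = 2*i+3) := by
        rcases Nat.even_or_odd m with ⟨i, hi⟩ | ⟨i, hi⟩
        · rcases Nat.lt_or_ge i 2 with h | h
          · have h2 : m = 0 ∨ m = 2 := by omega
            rcases h2 with h2 | h2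
            · omega
            · exact Or.inr (Or.inl h2)
          · exact Or.inr (Or.inr (Or.inl ⟨i-2, by omega⟩))
        · rcases Nat.eq_zero_or_pos i with h | h
          · exact Or.inl (by omega)
          · exact Or.inr (Or.inr (Or.inr ⟨i-1, by omega⟩))
      rcases hcases with rfl | rfl | ⟨i, rfl⟩ | ⟨i, rfl⟩
      · refine ⟨by norm_num; exact ha2, ?_⟩
        norm_num
        rfl
      · constructor
        · norm_num; exact ha4
        · rw [show (2*((2:ℕ):ℤ)) = 4 by norm_num, ← hβ]
          push_cast
          simp only [hδ]
          ring
      · -- even inner index : m = 2i+4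
          have hb0 := getCE (i+1) (by omega) (by omega)
          have hb1 := getCE (i+2) (by omega) (by omega)
          have hb2 := getCE (i+3) (by omega) (by omega)
          have hc0 := getCO (i+1) (by omega)
          have hc1 := getCO (i+2) (by omega)
          push_cast at hb0 hb1 hb2 hc0 hc1 ⊢
          rw [show 2*((i:ℤ)+1) = 2*(i:ℤ)+2 by ring] at hb0
          rw [show 2*((i:ℤ)+2) = 2*(i:ℤ)+4 by ring] at hb1
          rw [show 2*((i:ℤ)+3) = 2*(i:ℤ)+6 by ring] at hb2
          rw [show 2*((i:ℤ)+1)+1 = 2*(i:ℤ)+3 by ring] at hc0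
          rw [show 2*((i:ℤ)+2)+1 = 2*(i:ℤ)+5 by ring] at hc1
          have hd := doubling a hW2 h0 hcop (2*(i:ℤ)+4)
          rw [show 2*(i:ℤ)+4-1 = 2*(i:ℤ)+3 by ring, show 2*(i:ℤ)+4+2 = 2*(i:ℤ)+6 by ring,
              show 2*(i:ℤ)+4-2 = 2*(i:ℤ)+2 by ring, show 2*(i:ℤ)+4+1 = 2*(i:ℤ)+5 by ring] at hd
          have hc0ne : a (2*(i:ℤ)+3) ≠ 0 := fun h => hc0 (h ▸ dvd_zero _)
          have hc1ne : a (2*(i:ℤ)+5) ≠ 0 := fun h => hc1 (h ▸ dvd_zero _)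
          set x : ℤ := a (2*(i:ℤ)+3) ^ 2 * a (2*(i:ℤ)+6) with hxdef
          set y : ℤ := a (2*(i:ℤ)+2) * a (2*(i:ℤ)+5) ^ 2 with hydef
          have hxne : x ≠ 0 := mul_ne_zero (pow_ne_zero _ hc0ne) hb2.1
          have hyne : y ≠ 0 := mul_ne_zero hb0.1 (pow_ne_zero _ hc1ne)
          have hpvx : (pv p x : ℤ) = A - ((i:ℤ)+2)*δ := by
            rw [hxdef, sq, mul_assoc,
              pv_mul hp hc0ne (mul_ne_zero hc0ne hb2.1),
              pv_mul hp hc0ne hb2.1,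
              pv_eq_zero_of_not_dvd hp hc0]
            push_cast
            rw [hb2.2]; ring
          have hpvy : (pv p y : ℤ) = A - (i:ℤ)*δ := by
            rw [hydef, sq, pv_mul hp hb0.1 (mul_ne_zero hc1ne hc1ne),
              pv_mul hp hc1ne hc1ne, pv_eq_zero_of_not_dvd hp hc1]
            push_cast
            rw [hb0.2]; ring
          have hxy : pv p x < pv p y := by
            have h' : (pv p x : ℤ) < (pv p y : ℤ) := by rw [hpvx, hpvy]; nlinarith
            exact_mod_cast h'
          obtain ⟨hsne, hspv⟩ := pv_sub hp hxne hyne hxy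
          have hane : a (2*(2*(i:ℤ)+4)) ≠ 0 := by
            intro h
            rw [h, mul_zero] at hd
            exact (mul_ne_zero hb1.1 hsne) hd.symm
          have hpveq : pv p (a 2) + pv p (a (2*(2*(i:ℤ)+4))) =
              pv p (a (2*(i:ℤ)+4)) + pv p (x - y) := by
            rw [← pv_mul hp ha2 hane, ← pv_mul hp hb1.1 hsne, hd]
          have goal2 : (pv p (a (2*(2*(i:ℤ)+4))) : ℤ) = A - (2*(i:ℤ)+4-1)*δ := by
            have hz : (α:ℤ) + (pv p (a (2*(2*(i:ℤ)+4))) : ℤ) =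
                (pv p (a (2*(i:ℤ)+4)) : ℤ) + (pv p (x - y) : ℤ) := by
              exact_mod_cast congrArg (fun t : ℕ => (t:ℤ)) hpveq
            rw [hspv] at hz
            rw [hpvx, hb1.2] at hz
            rw [← hA] at hz
            linarith
          exact ⟨hane, goal2⟩
      · -- odd inner index : m = 2i+3
          have hb0 := getCE (i+1) (by omega) (by omega)
          have hb1 := getCE (i+2) (by omega) (by omega)
          have hc0 := getCO i (by omega)
          have hc1 := getCO (i+1) (by omega)
          have hc2 := getCO (i+2) (by omega)
          push_cast at hb0 hb1 hc0 hc1 hc2 ⊢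
          rw [show 2*((i:ℤ)+1) = 2*(i:ℤ)+2 by ring] at hb0
          rw [show 2*((i:ℤ)+2) = 2*(i:ℤ)+4 by ring] at hb1
          rw [show 2*((i:ℤ)+1)+1 = 2*(i:ℤ)+3 by ring] at hc1
          rw [show 2*((i:ℤ)+2)+1 = 2*(i:ℤ)+5 by ring] at hc2
          have hd := doubling a hW2 h0 hcop (2*(i:ℤ)+3)
          rw [show 2*(i:ℤ)+3-1 = 2*(i:ℤ)+2 by ring, show 2*(i:ℤ)+3+2 = 2*(i:ℤ)+5 by ring,
              show 2*(i:ℤ)+3-2 = 2*(i:ℤ)+1 by ring, show 2*(i:ℤ)+3+1 = 2*(i:ℤ)+4 by ring] at hd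
          have hc0ne : a (2*(i:ℤ)+1) ≠ 0 := fun h => hc0 (h ▸ dvd_zero _)
          have hc1ne : a (2*(i:ℤ)+3) ≠ 0 := fun h => hc1 (h ▸ dvd_zero _)
          have hc2ne : a (2*(i:ℤ)+5) ≠ 0 := fun h => hc2 (h ▸ dvd_zero _)
          set x : ℤ := a (2*(i:ℤ)+2) ^ 2 * a (2*(i:ℤ)+5) with hxdef
          set y : ℤ := a (2*(i:ℤ)+1) * a (2*(i:ℤ)+4) ^ 2 with hydef
          have hxne : x ≠ 0 := mul_ne_zero (pow_ne_zero _ hb0.1) hc2ne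
          have hyne : y ≠ 0 := mul_ne_zero hc0ne (pow_ne_zero _ hb1.1)
          have hpvx : (pv p x : ℤ) = 2*(A - (i:ℤ)*δ) := by
            rw [hxdef, sq, mul_assoc,
              pv_mul hp hb0.1 (mul_ne_zero hb0.1 hc2ne),
              pv_mul hp hb0.1 hc2ne,
              pv_eq_zero_of_not_dvd hp hc2]
            push_cast
            rw [hb0.2]; ring
          have hpvy : (pv p y : ℤ) = 2*(A - ((i:ℤ)+1)*δ) := by
            rw [hydef, sq, pv_mul hp hc0ne (mul_ne_zero hb1.1 hb1.1),
              pv_mul hp hb1.1 hb1.1, pv_eq_zero_of_not_dvd hp hc0]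
            push_cast
            rw [hb1.2]; ring
          have hxy : pv p y < pv p x := by
            have h' : (pv p y : ℤ) < (pv p x : ℤ) := by rw [hpvx, hpvy]; nlinarith
            exact_mod_cast h'
          obtain ⟨hsne, hspv⟩ := pv_sub' hp hxne hyne hxy
          have hane : a (2*(2*(i:ℤ)+3)) ≠ 0 := by
            intro h
            rw [h, mul_zero] at hd
            exact (mul_ne_zero hc1ne hsne) hd.symm
          have hpveq : pv p (a 2) + pv p (a (2*(2*(i:ℤ)+3))) =
              pv p (a (2*(i:ℤ)+3)) + pv p (x - y) := by
            rw [← pv_mul hp ha2 hane, ← pv_mul hp hc1ne hsne, hd]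
          have goal2 : (pv p (a (2*(2*(i:ℤ)+3))) : ℤ) = A - (2*(i:ℤ)+3-1)*δ := by
            have hz : (α:ℤ) + (pv p (a (2*(2*(i:ℤ)+3))) : ℤ) =
                (pv p (a (2*(i:ℤ)+3)) : ℤ) + (pv p (x - y) : ℤ) := by
              exact_mod_cast congrArg (fun t : ℕ => (t:ℤ)) hpveq
            rw [hspv] at hz
            rw [hpvy, pv_eq_zero_of_not_dvd hp hc1] at hz
            rw [← hA] at hz
            push_cast at hz
            linarith
          exact ⟨hane, goal2⟩
    · -- odd claims
      rintro m rfl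
      have hcases : m = 0 ∨ m = 1 ∨ (∃ i, m = 2*i+2) ∨ (∃ i, m = 2*i+3) := by
        rcases Nat.even_or_odd m with ⟨i, hi⟩ | ⟨i, hi⟩
        · rcases Nat.eq_zero_or_pos i with h | h
          · exact Or.inl (by omega)
          · exact Or.inr (Or.inr (Or.inl ⟨i-1, by omega⟩))
        · rcases Nat.eq_zero_or_pos i with h | h
          · exact Or.inr (Or.inl (by omega))
          · exact Or.inr (Or.inr (Or.inr ⟨i-1, by omega⟩))
      rcases hcases with rfl | rfl | ⟨i, rfl⟩ | ⟨i, rfl⟩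
      · -- a 1
        intro hdvd
        norm_num at hdvd
        have h1 : (p:ℤ) ∣ a 1 * a 1 := hdvd.mul_right _
        have h2 : a 1 * a 1 = 1 := by have := a1_sq a h0 hcop; nlinarith [this]
        rw [h2] at h1
        exact hpZ.not_dvd_one h1
      · -- a 3
        intro hdvd
        norm_num at hdvd
        obtain ⟨u, v, huv⟩ := hcop 2
        norm_num at huv
        have : (p:ℤ) ∣ 1 := by
          rw [← huv]
          exact dvd_add (hpa2.mul_left u) (hdvd.mul_left v)
        exact hpZ.not_dvd_one this
      · -- m = 2i+2 even : a (4i+5)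
          have hc0 := getCO i (by omega)
          have hc1 := getCO (i+1) (by omega)
          have hdvdb := pos_dvd (i+1) (by omega) (by omega)
          push_cast at hc0 hc1 hdvdb ⊢
          rw [show 2*((i:ℤ)+1) = 2*(i:ℤ)+2 by ring] at hdvdb
          rw [show 2*((i:ℤ)+1)+1 = 2*(i:ℤ)+3 by ring] at hc1
          intro hdvd
          rw [show 2*(2*(i:ℤ)+2)+1 = 2*(2*(i:ℤ)+2)+1 by ring] at hdvd
          have hoe := odd_entry a hW1 (2*(i:ℤ)+2)
          rw [show 2*(i:ℤ)+2+2 = 2*(i:ℤ)+4 by ring, show 2*(i:ℤ)+2-1 = 2*(i:ℤ)+1 by ring,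
              show 2*(i:ℤ)+2+1 = 2*(i:ℤ)+3 by ring] at hoe
          have hterm2 : (p:ℤ) ∣ a (2*(i:ℤ)+1) * a (2*(i:ℤ)+3) * a (2*(i:ℤ)+3)^2 := by
            have h1 : (p:ℤ) ∣ a (2*(i:ℤ)+2)^2 * (a (2*(i:ℤ)+2) * a (2*(i:ℤ)+4)) :=
              Dvd.dvd.mul_left (hdvdb.mul_right _) _
            have h2 : (p:ℤ) ∣ a (2*(2*(i:ℤ)+2)+1) * a 1 := hdvd.mul_right _
            have := dvd_sub h1 h2
            rw [hoe] at this
            simpa using this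
          rcases hpZ.dvd_mul.1 hterm2 with h | h
          · rcases hpZ.dvd_mul.1 h with h' | h'
            · exact hc0 h'
            · exact hc1 h'
          · rw [sq] at h
            rcases hpZ.dvd_mul.1 h with h' | h' <;> exact hc1 h'
      · -- m = 2i+3 odd : a (4i+7)
          have hc1 := getCO (i+1) (by omega)
          have hc2 := getCO (i+2) (by omega)
          have hdvdb := pos_dvd (i+1) (by omega) (by omega)
          push_cast at hc1 hc2 hdvdb ⊢
          rw [show 2*((i:ℤ)+1) = 2*(i:ℤ)+2 by ring] at hdvdb
          rw [show 2*((i:ℤ)+1)+1 = 2*(i:ℤ)+3 by ring] at hc1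
          rw [show 2*((i:ℤ)+2)+1 = 2*(i:ℤ)+5 by ring] at hc2
          intro hdvd
          have hoe := odd_entry a hW1 (2*(i:ℤ)+3)
          rw [show 2*(i:ℤ)+3+2 = 2*(i:ℤ)+5 by ring, show 2*(i:ℤ)+3-1 = 2*(i:ℤ)+2 by ring,
              show 2*(i:ℤ)+3+1 = 2*(i:ℤ)+4 by ring] at hoe
          have hterm1 : (p:ℤ) ∣ a (2*(i:ℤ)+3)^2 * (a (2*(i:ℤ)+3) * a (2*(i:ℤ)+5)) := by
            have h2 : (p:ℤ) ∣ a (2*(2*(i:ℤ)+3)+1) * a 1 := hdvd.mul_right _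
            have h1 : (p:ℤ) ∣ a (2*(i:ℤ)+2) * a (2*(i:ℤ)+4) * a (2*(i:ℤ)+4)^2 :=
              Dvd.dvd.mul_right (hdvdb.mul_right _) _
            have := dvd_add h2 h1
            rw [hoe] at this
            simpa using this
          rcases hpZ.dvd_mul.1 hterm1 with h | h
          · rw [sq] at h
            rcases hpZ.dvd_mul.1 h with h' | h' <;> exact hc1 h'
          · rcases hpZ.dvd_mul.1 h with h' | h'
            · exact hc1 h'
            · exact hc2 h'
  -- final contradiction
  have hfin := (main (2*(α+2))).1 (α+2) rfl (by omega)
  have h0' : (0:ℤ) ≤ (pv p (a (2*((α+2:ℕ):ℤ))) : ℤ) := by positivity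
  rw [hfin.2] at h0'
  push_cast at h0'
  have : ((α:ℤ)+1)*δ ≤ A := by linarith
  rw [hA] at this
  nlinarith

end Crux
section Rest

variable {a : ℤ → ℤ}
    (hW1 : ∀ m n : ℤ, a (m + n) * a (m - n) =
      (a n) ^ 2 * (a (m - 1) * a (m + 1)) - a (n - 1) * a (n + 1) * (a m) ^ 2)
    (hW2 : ∀ m n : ℤ, a 1 * a 2 * (a (m + n + 1) * a (m - n)) =
      a n * a (n + 1) * (a (m - 1) * a (m + 2)) - a (n - 1) * a (n + 2) * (a m * a (m + 1)))
    (h0 : a 0 = 0)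
    (hcop : ∀ n : ℤ, IsCoprime (a n) (a (n + 1)))

include hW1 hW2 h0 hcop in
lemma S2nat (ha2 : a 2 ≠ 0) : ∀ j : ℕ, a 2 ∣ a (2*(j:ℤ)) := by
  intro j
  induction j using Nat.strong_induction_on with
  | _ j IH =>
  have hcases : j = 0 ∨ j = 1 ∨ j = 2 ∨ (∃ s, j = 2*s+4) ∨ (∃ s, j = 2*s+3) := by
    rcases Nat.even_or_odd j with ⟨i, hi⟩ | ⟨i, hi⟩
    · rcases Nat.lt_or_ge i 2 with h | h
      · have : j = 0 ∨ j = 2 := by omega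
        rcases this with h2 | h2
        · exact Or.inl h2
        · exact Or.inr (Or.inr (Or.inl h2))
      · exact Or.inr (Or.inr (Or.inr (Or.inl ⟨i-2, by omega⟩)))
    · rcases Nat.lt_or_ge i 1 with h | h
      · exact Or.inr (Or.inl (by omega))
      · exact Or.inr (Or.inr (Or.inr (Or.inr ⟨i-1, by omega⟩)))
  rcases hcases with rfl | rfl | rfl | ⟨s, rfl⟩ | ⟨s, rfl⟩
  · rw [show (2*((0:ℕ):ℤ)) = 0 by norm_num, h0]
    exact dvd_zero _
  · rw [show (2*((1:ℕ):ℤ)) = 2 by norm_num]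
  · rw [show (2*((2:ℕ):ℤ)) = 4 by norm_num]
    exact crux hW1 hW2 h0 hcop ha2
  · -- j = 2s+4 even
    have h1 := IH (s+1) (by omega)
    have h2 := IH (s+2) (by omega)
    have h3 := IH (s+3) (by omega)
    push_cast at h1 h2 h3 ⊢
    rw [show 2*((s:ℤ)+1) = 2*(s:ℤ)+2 by ring] at h1
    rw [show 2*((s:ℤ)+2) = 2*(s:ℤ)+4 by ring] at h2
    rw [show 2*((s:ℤ)+3) = 2*(s:ℤ)+6 by ring] at h3
    obtain ⟨c, hc⟩ := h2
    have hd := doubling a hW2 h0 hcop (2*(s:ℤ)+4)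
    rw [show 2*(s:ℤ)+4-1 = 2*(s:ℤ)+3 by ring, show 2*(s:ℤ)+4+2 = 2*(s:ℤ)+6 by ring,
        show 2*(s:ℤ)+4-2 = 2*(s:ℤ)+2 by ring, show 2*(s:ℤ)+4+1 = 2*(s:ℤ)+5 by ring] at hd
    have hZ : a 2 ∣ a (2*(s:ℤ)+3)^2 * a (2*(s:ℤ)+6) - a (2*(s:ℤ)+2) * a (2*(s:ℤ)+5)^2 :=
      dvd_sub (h3.mul_left _) (Dvd.dvd.mul_right h1 _)
    obtain ⟨z, hz⟩ := hZ
    rw [hc, hz] at hd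
    have : a (2*(2*(s:ℤ)+4)) = a 2 * (c * z) := by
      apply mul_left_cancel₀ ha2
      rw [hd]; ring
    rw [show 2*(2*(s:ℤ)+4) = 2*(2*(s:ℤ)+4) by ring] at this
    rw [show (2*(2*(s:ℤ)+4) : ℤ) = 4*(s:ℤ)+8 by ring] at this
    rw [show (2*(2*(s:ℤ)+4) : ℤ) = 4*(s:ℤ)+8 by ring]
    exact ⟨c*z, this⟩
  · -- j = 2s+3 odd
    have h1 := IH (s+1) (by omega)
    have h2 := IH (s+2) (by omega)
    push_cast at h1 h2 ⊢
    rw [show 2*((s:ℤ)+1) = 2*(s:ℤ)+2 by ring] at h1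
    rw [show 2*((s:ℤ)+2) = 2*(s:ℤ)+4 by ring] at h2
    obtain ⟨c1, hc1⟩ := h1
    obtain ⟨c2, hc2⟩ := h2
    have hd := doubling a hW2 h0 hcop (2*(s:ℤ)+3)
    rw [show 2*(s:ℤ)+3-1 = 2*(s:ℤ)+2 by ring, show 2*(s:ℤ)+3+2 = 2*(s:ℤ)+5 by ring,
        show 2*(s:ℤ)+3-2 = 2*(s:ℤ)+1 by ring, show 2*(s:ℤ)+3+1 = 2*(s:ℤ)+4 by ring] at hd
    rw [hc1, hc2] at hd
    have : a (2*(2*(s:ℤ)+3)) = a 2 * (a (2*(s:ℤ)+3) *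
        (c1^2 * a (2*(s:ℤ)+5) - a (2*(s:ℤ)+1) * c2^2)) := by
      apply mul_left_cancel₀ ha2
      rw [hd]; ring
    rw [show (2*(2*(s:ℤ)+3) : ℤ) = 4*(s:ℤ)+6 by ring] at this
    rw [show (2*(2*(s:ℤ)+3) : ℤ) = 4*(s:ℤ)+6 by ring]
    exact Dvd.intro _ this.symm

include hW1 hW2 h0 hcop in
lemma S2int (ha2 : a 2 ≠ 0) : ∀ M : ℤ, a 2 ∣ a (2*M) := by
  intro M
  rcases le_or_gt 0 M with h | h
  · obtain ⟨j, rfl⟩ := Int.eq_ofNat_of_zero_le h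
    exact S2nat hW1 hW2 h0 hcop ha2 j
  · have h1 := S2nat hW1 hW2 h0 hcop ha2 (-M).toNat
    rw [Int.toNat_of_nonneg (by omega)] at h1
    have h2 : a (2*M) = - a (2*(-M)) := by
      have := a_neg a hW1 h0 hcop (2*(-M))
      rw [show (-(2*(-M)) : ℤ) = 2*M by ring] at this
      rw [this]
    rw [h2]
    exact h1.neg_right

include hW1 hW2 h0 hcop in
lemma Zdvd (ha2 : a 2 ≠ 0) : ∀ N : ℤ,
    a 2 ∣ (a (N-1)^2 * a (N+2) - a (N-2) * a (N+1)^2) := by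
  intro N
  rcases Int.even_or_odd N with ⟨M, hM⟩ | ⟨M, hM⟩
  · subst hM
    have h1 := S2int hW1 hW2 h0 hcop ha2 (M+1)
    have h2 := S2int hW1 hW2 h0 hcop ha2 (M-1)
    rw [show 2*(M+1) = M+M+2 by ring] at h1
    rw [show 2*(M-1) = M+M-2 by ring] at h2
    exact dvd_sub (h1.mul_left _) (h2.mul_right _)
  · subst hM
    have h1 := S2int hW1 hW2 h0 hcop ha2 M
    have h2 := S2int hW1 hW2 h0 hcop ha2 (M+1)
    rw [show 2*M = 2*M+1-1 by ring] at h1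
    rw [show 2*(M+1) = 2*M+1+1 by ring] at h2
    refine dvd_sub (dvd_mul_of_dvd_left (dvd_pow h1 two_ne_zero) _)
      (dvd_mul_of_dvd_right (dvd_pow h2 two_ne_zero) _)

-- Case A : a 2 = 0
include hW1 h0 hcop in
lemma a3_unit_of_a2_zero (ha2 : a 2 = 0) : IsUnit (a 3) := by
  have := hcop 2
  rw [ha2] at this
  norm_num at this
  exact isCoprime_zero_left.1 this

include hW1 h0 hcop in
lemma evens_zero_nat (ha2 : a 2 = 0) : ∀ j : ℕ, a (2*(j:ℤ)) = 0 := by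
  have hu : a 1 * a 3 ≠ 0 :=
    ((a1_unit a h0 hcop).mul (a3_unit_of_a2_zero hW1 h0 hcop ha2)).ne_zero
  intro j
  induction j using Nat.strong_induction_on with
  | _ j IH =>
  have hcases : j = 0 ∨ j = 1 ∨ ∃ i, j = i+2 := by
    rcases j with _|j
    · exact Or.inl rfl
    rcases j with _|j
    · exact Or.inr (Or.inl rfl)
    · exact Or.inr (Or.inr ⟨j, rfl⟩)
  rcases hcases with rfl | rfl | ⟨i, rfl⟩
  · rw [show (2*((0:ℕ):ℤ)) = 0 by norm_num]; exact h0
  · rw [show (2*((1:ℕ):ℤ)) = 2 by norm_num]; exact ha2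
  · have hIH := IH (i+1) (by omega)
    push_cast at hIH ⊢
    rw [show 2*((i:ℤ)+1) = 2*(i:ℤ)+2 by ring] at hIH
    have h := hW1 (2*(i:ℤ)+4) 2
    rw [show 2*(i:ℤ)+4+2 = 2*(i:ℤ)+6 by ring, show 2*(i:ℤ)+4-2 = 2*(i:ℤ)+2 by ring,
        show 2*(i:ℤ)+4-1 = 2*(i:ℤ)+3 by ring, show 2*(i:ℤ)+4+1 = 2*(i:ℤ)+5 by ring,
        show (2:ℤ)-1 = 1 by norm_num, show (2:ℤ)+1 = 3 by norm_num, hIH, ha2] at h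
    have h2 : a 1 * a 3 * a (2*(i:ℤ)+4)^2 = 0 := by linarith
    have h3 : a (2*(i:ℤ)+4)^2 = 0 := by
      rcases mul_eq_zero.1 h2 with h' | h'
      · exact absurd h' hu
      · exact h'
    have h4 : a (2*(i:ℤ)+4) = 0 := by
      exact pow_eq_zero_iff two_ne_zero |>.1 h3
    rw [show 2*((i:ℤ)+2) = 2*(i:ℤ)+4 by ring]
    exact h4

include hW1 h0 hcop in
lemma evens_zero_int (ha2 : a 2 = 0) : ∀ M : ℤ, a (2*M) = 0 := by
  intro M
  rcases le_or_gt 0 M with h | h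
  · obtain ⟨j, rfl⟩ := Int.eq_ofNat_of_zero_le h
    exact evens_zero_nat hW1 h0 hcop ha2 j
  · have h1 := evens_zero_nat hW1 h0 hcop ha2 (-M).toNat
    rw [Int.toNat_of_nonneg (by omega)] at h1
    have h2 : a (2*M) = - a (2*(-M)) := by
      have := a_neg a hW1 h0 hcop (2*(-M))
      rw [show (-(2*(-M)) : ℤ) = 2*M by ring] at this
      rw [this]
    rw [h2, h1, neg_zero]

include hW1 h0 hcop in
lemma odds_unit_nat (ha2 : a 2 = 0) : ∀ j : ℕ, IsUnit (a (2*(j:ℤ)+1)) := by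
  have hu : IsUnit (a 1 * a 3) :=
    (a1_unit a h0 hcop).mul (a3_unit_of_a2_zero hW1 h0 hcop ha2)
  intro j
  induction j using Nat.strong_induction_on with
  | _ j IH =>
  have hcases : j = 0 ∨ j = 1 ∨ ∃ i, j = i+2 := by
    rcases j with _|j
    · exact Or.inl rfl
    rcases j with _|j
    · exact Or.inr (Or.inl rfl)
    · exact Or.inr (Or.inr ⟨j, rfl⟩)
  rcases hcases with rfl | rfl | ⟨i, rfl⟩
  · rw [show (2*((0:ℕ):ℤ)+1) = 1 by norm_num]; exact a1_unit a h0 hcop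
  · rw [show (2*((1:ℕ):ℤ)+1) = 3 by norm_num]; exact a3_unit_of_a2_zero hW1 h0 hcop ha2
  · have hIH := IH (i+1) (by omega)
    push_cast at hIH ⊢
    rw [show 2*((i:ℤ)+1)+1 = 2*(i:ℤ)+3 by ring] at hIH
    have h := hW1 (2*(i:ℤ)+3) 2
    rw [show 2*(i:ℤ)+3+2 = 2*(i:ℤ)+5 by ring, show 2*(i:ℤ)+3-2 = 2*(i:ℤ)+1 by ring,
        show 2*(i:ℤ)+3-1 = 2*(i:ℤ)+2 by ring, show 2*(i:ℤ)+3+1 = 2*(i:ℤ)+4 by ring,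
        show (2:ℤ)-1 = 1 by norm_num, show (2:ℤ)+1 = 3 by norm_num, ha2] at h
    have h2 : a (2*(i:ℤ)+5) * a (2*(i:ℤ)+1) = -(a 1 * a 3 * a (2*(i:ℤ)+3)^2) := by linarith
    have hrhs : IsUnit (-(a 1 * a 3 * a (2*(i:ℤ)+3)^2)) := by
      exact (hu.mul (hIH.pow 2)).neg
    rw [← h2] at hrhs
    rw [show 2*((i:ℤ)+2)+1 = 2*(i:ℤ)+5 by ring]
    exact isUnit_of_mul_isUnit_left hrhs

include hW1 h0 hcop in
lemma odds_unit_int (ha2 : a 2 = 0) : ∀ M : ℤ, IsUnit (a (2*M+1)) := by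
  intro M
  rcases le_or_gt 0 M with h | h
  · obtain ⟨j, rfl⟩ := Int.eq_ofNat_of_zero_le h
    exact odds_unit_nat hW1 h0 hcop ha2 j
  · have h1 := odds_unit_nat hW1 h0 hcop ha2 (-M-1).toNat
    rw [Int.toNat_of_nonneg (by omega)] at h1
    have h2 : a (2*M+1) = - a (2*(-M-1)+1) := by
      have := a_neg a hW1 h0 hcop (2*(-M-1)+1)
      rw [show (-(2*(-M-1)+1) : ℤ) = 2*M+1 by ring] at this
      rw [this]
    rw [h2]
    exact h1.neg

-- Case B : a k = 0 (a 2 ≠ 0)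
include hW1 hW2 h0 hcop in
lemma caseB (ha2 : a 2 ≠ 0) {k : ℤ} (hak : a k = 0) : ∀ t : ℕ, a (k*(t:ℤ)) = 0 := by
  have hw : IsUnit (a (k-1)) := by
    have := hcop (k-1)
    rw [show k-1+1 = k by ring, hak] at this
    exact isCoprime_zero_right.1 this
  have hu : IsUnit (a (k+1)) := by
    have := hcop k
    rw [hak] at this
    exact isCoprime_zero_left.1 this
  intro t
  induction t using Nat.strong_induction_on with
  | _ t IH =>
  have hcases : t = 0 ∨ t = 1 ∨ (∃ s, 1 ≤ s ∧ t = 2*s) ∨ (∃ s, 1 ≤ s ∧ t = 2*s+1) := by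
    rcases Nat.even_or_odd t with ⟨i, hi⟩ | ⟨i, hi⟩
    · rcases Nat.eq_zero_or_pos i with h | h
      · exact Or.inl (by omega)
      · exact Or.inr (Or.inr (Or.inl ⟨i, by omega, by omega⟩))
    · rcases Nat.eq_zero_or_pos i with h | h
      · exact Or.inr (Or.inl (by omega))
      · exact Or.inr (Or.inr (Or.inr ⟨i, by omega, by omega⟩))
  rcases hcases with rfl | rfl | ⟨s, hs, rfl⟩ | ⟨s, hs, rfl⟩
  · rw [show (k*((0:ℕ):ℤ)) = 0 by norm_num]; exact h0
  · rw [show (k*((1:ℕ):ℤ)) = k by norm_num]; exact hak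
  · -- t = 2s
    have hIH := IH s (by omega)
    have hd := doubling a hW2 h0 hcop (k*(s:ℤ))
    rw [hIH, zero_mul] at hd
    have hz : a (2*(k*(s:ℤ))) = 0 := by
      rcases mul_eq_zero.1 hd with h' | h'
      · exact absurd h' ha2
      · exact h'
    push_cast
    rw [show k*(2*(s:ℤ)) = 2*(k*(s:ℤ)) by ring]
    exact hz
  · -- t = 2s+1
    have hIH := IH (2*s) (by omega)
    push_cast at hIH ⊢
    have h := hW1 (k*(2*(s:ℤ)+1)) k
    rw [show k*(2*(s:ℤ)+1) + k = k*(2*(s:ℤ)+2) by ring,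
        show k*(2*(s:ℤ)+1) - k = k*(2*(s:ℤ)) by ring, hIH, hak] at h
    have h2 : a (k-1) * a (k+1) * a (k*(2*(s:ℤ)+1))^2 = 0 := by
      rw [mul_zero] at h
      nlinarith [h]
    have h3 : a (k*(2*(s:ℤ)+1))^2 = 0 := by
      rcases mul_eq_zero.1 h2 with h' | h'
      · exact absurd h' (hw.mul hu).ne_zero
      · exact h'
    exact pow_eq_zero_iff two_ne_zero |>.1 h3

-- Case C : main induction (a 2 ≠ 0, a k ≠ 0)
include hW1 hW2 h0 hcop in
lemma caseC (ha2 : a 2 ≠ 0) {k : ℤ} (hak : a k ≠ 0) : ∀ t : ℕ, a k ∣ a (k*(t:ℤ)) := by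
  intro t
  induction t using Nat.strong_induction_on with
  | _ t IH =>
  have hcases : t = 0 ∨ t = 1 ∨ (∃ s, 1 ≤ s ∧ t = 2*s) ∨ (∃ s, 1 ≤ s ∧ t = 2*s+1) := by
    rcases Nat.even_or_odd t with ⟨i, hi⟩ | ⟨i, hi⟩
    · rcases Nat.eq_zero_or_pos i with h | h
      · exact Or.inl (by omega)
      · exact Or.inr (Or.inr (Or.inl ⟨i, by omega, by omega⟩))
    · rcases Nat.eq_zero_or_pos i with h | h
      · exact Or.inr (Or.inl (by omega))
      · exact Or.inr (Or.inr (Or.inr ⟨i, by omega, by omega⟩))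
  rcases hcases with rfl | rfl | ⟨s, hs, rfl⟩ | ⟨s, hs, rfl⟩
  · rw [show (k*((0:ℕ):ℤ)) = 0 by norm_num, h0]
    exact dvd_zero _
  · rw [show (k*((1:ℕ):ℤ)) = k by norm_num]
  · -- t = 2s
    obtain ⟨c, hc⟩ := IH s (by omega)
    obtain ⟨z, hz⟩ := Zdvd hW1 hW2 h0 hcop ha2 (k*(s:ℤ))
    have hd := doubling a hW2 h0 hcop (k*(s:ℤ))
    rw [hc, hz] at hd
    have : a (2*(k*(s:ℤ))) = a k * (c * z) := by
      apply mul_left_cancel₀ ha2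
      rw [hd]; ring
    push_cast
    rw [show k*(2*(s:ℤ)) = 2*(k*(s:ℤ)) by ring]
    exact ⟨_, this⟩
  · -- t = 2s+1
    obtain ⟨c1, hc1⟩ := IH s (by omega)
    obtain ⟨c2, hc2⟩ := IH (s+1) (by omega)
    push_cast at hc2 ⊢
    have h := hW1 (k*((s:ℤ)+1)) (k*(s:ℤ))
    rw [show k*((s:ℤ)+1) + k*(s:ℤ) = k*(2*(s:ℤ)+1) by ring,
        show k*((s:ℤ)+1) - k*(s:ℤ) = k by ring, hc1, hc2] at h
    have h2 : a (k*(2*(s:ℤ)+1)) * a k = a k * (a k *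
        (c1^2 * (a (k*((s:ℤ)+1)-1) * a (k*((s:ℤ)+1)+1))
          - a (k*(s:ℤ)-1) * a (k*(s:ℤ)+1) * c2^2)) := by
      rw [h]; ring
    have h3 : a (k*(2*(s:ℤ)+1)) = a k *
        (c1^2 * (a (k*((s:ℤ)+1)-1) * a (k*((s:ℤ)+1)+1))
          - a (k*(s:ℤ)-1) * a (k*(s:ℤ)+1) * c2^2) := by
      apply mul_right_cancel₀ hak
      rw [h2]; ring
    exact ⟨_, h3⟩

end Rest
end EDSAux

open EDSAux in
/-- An elliptic divisibility sequence (satisfying Ward's two recurrence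
families) with `a 0 = 0` and coprime consecutive terms is a divisibility
sequence: `k ∣ m → a k ∣ a m` for all `k > 1`. -/
theorem eds_divisibility_sequence (a : ℤ → ℤ)
    (hW1 : ∀ m n : ℤ, a (m + n) * a (m - n) =
      (a n) ^ 2 * (a (m - 1) * a (m + 1)) - a (n - 1) * a (n + 1) * (a m) ^ 2)
    (hW2 : ∀ m n : ℤ, a 1 * a 2 * (a (m + n + 1) * a (m - n)) =
      a n * a (n + 1) * (a (m - 1) * a (m + 2)) - a (n - 1) * a (n + 2) * (a m * a (m + 1)))
    (h0 : a 0 = 0)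
    (hcop : ∀ n : ℤ, IsCoprime (a n) (a (n + 1))) :
    ∀ k : ℤ, 1 < k → ∀ m : ℤ, k ∣ m → a k ∣ a m := by
  intro k hk m hkm
  obtain ⟨t, rfl⟩ := hkm
  by_cases ha2 : a 2 = 0
  · -- degenerate case : a 2 = 0
    rcases Int.even_or_odd k with ⟨K, hK⟩ | ⟨K, hK⟩
    · have hkt : a (k*t) = 0 := by
        have := evens_zero_int hW1 h0 hcop ha2 (K*t)
        rw [show 2*(K*t) = (K+K)*t by ring, ← hK] at this
        exact this
      rw [hkt]
      exact dvd_zero _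
    · have hu : IsUnit (a k) := by
        have := odds_unit_int hW1 h0 hcop ha2 K
        rw [← hK] at this
        exact this
      exact hu.dvd
  · by_cases hak : a k = 0
    · -- a k = 0 : all multiples vanish
      suffices h : a (k*t) = 0 by rw [h]; exact dvd_zero _
      rcases le_or_gt 0 t with h | h
      · obtain ⟨n, rfl⟩ := Int.eq_ofNat_of_zero_le h
        exact caseB hW1 hW2 h0 hcop ha2 hak n
      · have h1 := caseB hW1 hW2 h0 hcop ha2 hak (-t).toNat
        rw [Int.toNat_of_nonneg (by omega)] at h1
        have h2 : a (k*t) = - a (k*(-t)) := by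
          have := a_neg a hW1 h0 hcop (k*(-t))
          rw [show (-(k*(-t)) : ℤ) = k*t by ring] at this
          rw [this]
        rw [h2, h1, neg_zero]
    · -- main case
      rcases le_or_gt 0 t with h | h
      · obtain ⟨n, rfl⟩ := Int.eq_ofNat_of_zero_le h
        exact caseC hW1 hW2 h0 hcop ha2 hak n
      · have h1 := caseC hW1 hW2 h0 hcop ha2 hak (-t).toNat
        rw [Int.toNat_of_nonneg (by omega)] at h1
        have h2 : a (k*t) = - a (k*(-t)) := by
          have := a_neg a hW1 h0 hcop (k*(-t))
          rw [show (-(k*(-t)) : ℤ) = k*t by ring] at this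
          rw [this]
        rw [h2]
        exact h1.neg_right
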